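/- Let 𝒟 ⊆ F_2^48 be the span of (1^16 0^32), (0^32 1^16), and all (a,a,a) with a ∈ RM(1,4), and let ξ = (110000001100000001100000011000001010000010100000) ∈ F_2^48. Then 𝒟^0 := {α ∈ 𝒟 : wt(α·ξ) ≡ 0 (mod 4)} is an F_2-linear subcode of 𝒟 of index 2; explicitly, 𝒟^0 is the span of (1^16 0^32), (0^32 1^16), and (a,a,a) for a ∈ {(1111111111111111), (1111000011110000), (1100110011001100), (1010101010101010)}, and 𝒟 ∖ 𝒟^0 = δ + 𝒟^0 where δ = (1111111100000000 1111111100000000 1111111100000000). -/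

import Mathlib

/-- The weight of a binary vector: the number of nonzero coordinates. -/
def wt {n : ℕ} (α : Fin n → ZMod 2) : ℕ :=
  (Finset.univ.filter (fun i => α i ≠ 0)).card

/-- The standard bilinear form `⟨α,β⟩ = ∑ i, α i * β i` on `F_2^n`. -/
def ip {n : ℕ} (α β : Fin n → ZMod 2) : ZMod 2 := ∑ i, α i * β i

/-- The support of a binary vector. -/
def supp {n : ℕ} (α : Fin n → ZMod 2) : Set (Fin n) := {i | α i ≠ 0}

/-- The dual code of a set of vectors. -/
def dualCode {n : ℕ} (S : Set (Fin n → ZMod 2)) : Set (Fin n → ZMod 2) :=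
  {δ | ∀ γ ∈ S, ip δ γ = 0}

/-- The five generators of the first-order Reed–Muller code RM(1,4). -/
def r0 : Fin 16 → ZMod 2 := fun _ => 1
def r1 : Fin 16 → ZMod 2 := fun i => if i.val < 8 then 1 else 0
def r2 : Fin 16 → ZMod 2 := fun i => if i.val % 8 < 4 then 1 else 0
def r3 : Fin 16 → ZMod 2 := fun i => if i.val % 4 < 2 then 1 else 0
def r4 : Fin 16 → ZMod 2 := fun i => if i.val % 2 = 0 then 1 else 0

/-- The first-order Reed–Muller code RM(1,4) ⊆ F_2^16. -/
def RM14 : Submodule (ZMod 2) (Fin 16 → ZMod 2) :=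
  Submodule.span (ZMod 2) {r0, r1, r2, r3, r4}

/-- The triple repetition `(a, a, a)` of a vector of length 16. -/
def tri (a : Fin 16 → ZMod 2) : Fin 48 → ZMod 2 :=
  fun i => a ⟨i.val % 16, Nat.mod_lt _ (by norm_num)⟩

/-- `(1^16 0^32)`. -/
def e1 : Fin 48 → ZMod 2 := fun i => if i.val < 16 then 1 else 0

/-- `(0^32 1^16)`. -/
def e2 : Fin 48 → ZMod 2 := fun i => if 32 ≤ i.val then 1 else 0

/-- The code 𝒟 ⊆ F_2^48, spanned by `(1^16 0^32)`, `(0^32 1^16)` and all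
`(a,a,a)` with `a ∈ RM(1,4)`. -/
def Dcode : Submodule (ZMod 2) (Fin 48 → ZMod 2) :=
  Submodule.span (ZMod 2) ({e1, e2} ∪ tri '' (RM14 : Set (Fin 16 → ZMod 2)))

/-- The `b`-th block of length 16 of a vector of length 48. -/
def blk (x : Fin 48 → ZMod 2) (b : Fin 3) : Fin 16 → ZMod 2 :=
  fun j => x ⟨16 * b.val + j.val, by have hb := b.isLt; have hj := j.isLt; omega⟩

/-- ξ = (1100 0000 1100 0000 | 0110 0000 0110 0000 | 1010 0000 1010 0000) ∈ F_2^48. -/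
def xiv : Fin 48 → ZMod 2 :=
  fun i => if i.val ∈ [0, 1, 8, 9, 17, 18, 25, 26, 32, 34, 40, 42] then 1 else 0

-- auxiliary
def f48 : Fin 48 → Fin 16 := fun i => ⟨i.val % 16, Nat.mod_lt _ (by norm_num)⟩
def triL : (Fin 16 → ZMod 2) →ₗ[ZMod 2] (Fin 48 → ZMod 2) :=
  LinearMap.funLeft _ _ f48
lemma tri_eq_triL : tri = ⇑triL := rfl
def G : Fin 7 → (Fin 48 → ZMod 2) := ![e1, e2, tri r0, tri r1, tri r2, tri r3, tri r4]
def G' : Fin 6 → (Fin 48 → ZMod 2) := ![e1, e2, tri r0, tri r2, tri r3, tri r4]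

lemma hD : Dcode = Submodule.span (ZMod 2) (Set.range G) := by
  unfold Dcode RM14
  rw [tri_eq_triL, ← Submodule.map_coe triL, Submodule.map_span, Submodule.span_union,
    Submodule.span_span, ← Submodule.span_union]
  congr 1
  simp [G, Matrix.range_cons, Matrix.range_empty, Set.image_insert_eq, ← tri_eq_triL]
  ext x
  simp [or_assoc]
  tauto

lemma hD' : Submodule.span (ZMod 2) ({e1, e2} ∪ tri '' {r0, r2, r3, r4})
    = Submodule.span (ZMod 2) (Set.range G') := by
  congr 1
  simp [G', Matrix.range_cons, Matrix.range_empty, Set.image_insert_eq]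
  ext x
  simp [or_assoc]
  tauto

lemma zmod2_ne : ∀ x : ZMod 2, x ≠ 0 → x = 1 := by decide

set_option maxHeartbeats 1000000 in
lemma sum_update3 (c : Fin 7 → ZMod 2) (v : ZMod 2) :
    ∑ i, (Function.update c 3 v) i • G i = v • G 3 + c 3 • G 3 + ∑ i, c i • G i := by
  simp only [Fin.sum_univ_seven]
  rw [Function.update_of_ne (by decide), Function.update_of_ne (by decide),
    Function.update_of_ne (by decide), Function.update_self,
    Function.update_of_ne (by decide), Function.update_of_ne (by decide),
    Function.update_of_ne (by decide)]
  have h2 : (2 : ℤ) • (c 3 • G 3) = 0 := by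
    rw [two_smul, ← add_smul]
    simp [CharTwo.add_self_eq_zero]
  abel_nf
  rw [h2, add_zero]

set_option maxHeartbeats 8000000 in
set_option maxRecDepth 100000 in
lemma key : ∀ c : Fin 7 → ZMod 2, wt ((∑ i, c i • G i) * xiv) % 4 = 0 ↔ c 3 = 0 := by decide

lemma triadd : tri r1 + tri r1 = 0 := by
  ext i; simp [CharTwo.add_self_eq_zero]


theorem stmt14 :
    {α | α ∈ Dcode ∧ wt (α * xiv) % 4 = 0} =
      (Submodule.span (ZMod 2) ({e1, e2} ∪ tri '' {r0, r2, r3, r4}) :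
        Submodule (ZMod 2) (Fin 48 → ZMod 2)) ∧
    {α | α ∈ Dcode ∧ wt (α * xiv) % 4 ≠ 0} =
      (fun β => tri r1 + β) '' {α | α ∈ Dcode ∧ wt (α * xiv) % 4 = 0} := by
  have memD : ∀ a, a ∈ Dcode ↔ ∃ c : Fin 7 → ZMod 2, ∑ i, c i • G i = a := by
    intro a; rw [hD]; exact Submodule.mem_span_range_iff_exists_fun _
  have memD' : ∀ a : Fin 48 → ZMod 2,
      a ∈ Submodule.span (ZMod 2) ({e1, e2} ∪ tri '' {r0, r2, r3, r4}) ↔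
        ∃ d : Fin 6 → ZMod 2, ∑ j, d j • G' j = a := by
    intro a; rw [hD']; exact Submodule.mem_span_range_iff_exists_fun _
  constructor
  · ext α
    simp only [Set.mem_setOf_eq, SetLike.mem_coe, memD, memD']
    constructor
    · rintro ⟨⟨c, rfl⟩, h⟩
      have h3 : c 3 = 0 := (key c).mp h
      refine ⟨![c 0, c 1, c 2, c 4, c 5, c 6], ?_⟩
      simp [Fin.sum_univ_succ, G, G']
      norm_num [Fin.succ, h3]
    · rintro ⟨d, rfl⟩
      have hs : ∑ i, (![d 0, d 1, d 2, 0, d 3, d 4, d 5] : Fin 7 → ZMod 2) i • G i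
          = ∑ j, d j • G' j := by
        simp [Fin.sum_univ_succ, G, G']
      exact ⟨⟨_, hs⟩, by rw [← hs]; exact (key _).mpr rfl⟩
  · ext α
    simp only [Set.mem_setOf_eq, Set.mem_image, memD]
    constructor
    · rintro ⟨⟨c, rfl⟩, h⟩
      have h3 : c 3 = 1 := zmod2_ne _ (fun h0 => h ((key c).mpr h0))
      refine ⟨∑ i, (Function.update c 3 0) i • G i,
        ⟨⟨_, rfl⟩, (key _).mpr (Function.update_self _ _ _)⟩, ?_⟩
      rw [sum_update3, h3, zero_smul, zero_add, one_smul,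
        show G 3 = tri r1 from rfl, ← add_assoc, triadd, zero_add]
    · rintro ⟨β, ⟨⟨c, rfl⟩, hw⟩, rfl⟩
      have h3 : c 3 = 0 := (key c).mp hw
      have hsum : ∑ i, (Function.update c 3 1) i • G i = tri r1 + ∑ i, c i • G i := by
        rw [sum_update3, h3, zero_smul, add_zero, one_smul, show G 3 = tri r1 from rfl]
      refine ⟨⟨_, hsum⟩, ?_⟩
      rw [← hsum]
      intro h0
      have := (key _).mp h0
      rw [Function.update_self] at this
      exact one_ne_zero this
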